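/- The group G₂ of order 64 with presentation ⟨a, b | a^16 = 1, b^4 = 1, [b,a] = a^{-2}⟩ does not satisfy property (*); that is, G₂ does not embed as a subgroup of index 2 in any group generated by involutions. -/

import Mathlib

set_option maxRecDepth 40000


/-! ### A concrete model of the group of order 64 -/

structure G64 where
  x : ZMod 16
  y : ZMod 4
deriving DecidableEq, Fintype

namespace G64

def pp (y : ZMod 4) : ZMod 16 := 11 ^ y.val

instance : Mul G64 := ⟨fun g h => ⟨g.x + pp g.y * h.x, g.y + h.y⟩⟩
instance : One G64 := ⟨⟨0, 0⟩⟩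
instance : Inv G64 := ⟨fun g => ⟨-(pp (-g.y)) * g.x, -g.y⟩⟩

lemma mul_def (g h : G64) : g * h = ⟨g.x + pp g.y * h.x, g.y + h.y⟩ := rfl
lemma one_def : (1 : G64) = ⟨0, 0⟩ := rfl

lemma pp_add : ∀ y z : ZMod 4, pp (y + z) = pp y * pp z := by decide

instance : Group G64 where
  mul_assoc g h k := by
    simp only [mul_def, pp_add, mk.injEq]
    exact ⟨by ring, by ring⟩
  one_mul g := by simp [mul_def, one_def, pp]
  mul_one g := by simp [mul_def, one_def]
  inv_mul_cancel g := by
    show (⟨_, _⟩ : G64) * ⟨_, _⟩ = ⟨0, 0⟩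
    simp only [mul_def, mk.injEq]
    exact ⟨by ring, by ring⟩

def a : G64 := ⟨1, 0⟩
def b : G64 := ⟨0, 1⟩

/-- Evaluation map sending `(x,y)` to `A^x * B^y`. -/
def ee {H : Type*} [Group H] (A B : H) (g : G64) : H := A ^ g.x.val * B ^ g.y.val

/-- Two candidate characters `G64 → ZMod 2`. -/
def nu (c : Bool) (g : G64) : ZMod 2 := if c then (g.x.val : ZMod 2) else (g.y.val : ZMod 2)

lemma nu_mul : ∀ (c : Bool) (g h : G64), nu c (g * h) = nu c g + nu c h := by decide

lemma nu_sq : ∀ (c : Bool) (g : G64), g * g = 1 → nu c g = 0 := by decide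

lemma a_pow16 : a ^ 16 = 1 := by decide
lemma b_pow4 : b ^ 4 = 1 := by decide
lemma rel_ab : b⁻¹ * a * b = a ^ 3 := by decide
lemma ee_ab : ∀ g : G64, ee a b g = g := by decide

/-- The key finite verification: for every candidate square-one automorphism of `G64`
(determined by the images `A`, `B` of the generators), one of the two characters is
invariant and vanishes on the twisted involution set. -/
lemma keyDecide : ∀ A B : G64, B ^ 4 = 1 → B⁻¹ * A * B = A ^ 3 →
    ee A B A = a → ee A B B = b →
    ∃ c : Bool, (∀ g, nu c (ee A B g) = nu c g) ∧ (∀ g, ee A B g = g⁻¹ → nu c g = 0) := by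
  decide

/-! ### `ee A B` is a homomorphism whenever `A`, `B` satisfy the relations -/

section EE

variable {H : Type*} [Group H] {A B : H}

lemma pow_congr {A : H} {n : ℕ} (hA : A ^ n = 1) {k l : ℕ}
    (h : (k : ZMod n) = (l : ZMod n)) : A ^ k = A ^ l := by
  rw [pow_eq_pow_iff_modEq]
  exact Nat.ModEq.of_dvd (orderOf_dvd_of_pow_eq_one hA)
    ((ZMod.natCast_eq_natCast_iff _ _ _).mp h)

lemma conj_pow_eq (hAB : B⁻¹ * A * B = A ^ 3) (m : ℕ) :
    B⁻¹ * A ^ m * B = A ^ (3 * m) := by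
  have h : (B⁻¹ * A * B) ^ m = B⁻¹ * A ^ m * B := by
    induction m with
    | zero => group
    | succ k ih => rw [pow_succ, pow_succ, ih]; group
  rw [← h, hAB, ← pow_mul]

lemma swap_one (hA : A ^ 16 = 1) (hAB : B⁻¹ * A * B = A ^ 3) (m : ℕ) :
    B * A ^ m = A ^ (11 * m) * B := by
  have h3 : B⁻¹ * A ^ (11 * m) * B = A ^ m := by
    rw [conj_pow_eq hAB]
    refine pow_congr hA ?_
    push_cast
    ring_nf
    rw [show (33 : ZMod 16) = 1 by decide, mul_one]
  calc B * A ^ m = B * (B⁻¹ * A ^ (11 * m) * B) := by rw [h3]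
    _ = A ^ (11 * m) * B := by group

lemma swap_pow (hA : A ^ 16 = 1) (hAB : B⁻¹ * A * B = A ^ 3) (n m : ℕ) :
    B ^ n * A ^ m = A ^ (11 ^ n * m) * B ^ n := by
  induction n with
  | zero => simp
  | succ k ih =>
    have : B ^ (k + 1) * A ^ m = B * (B ^ k * A ^ m) := by rw [pow_succ']; group
    rw [this, ih, ← mul_assoc, swap_one hA hAB, pow_succ']
    rw [show 11 * (11 ^ k * m) = 11 ^ (k + 1) * m by ring]
    group

lemma ee_mul (hA : A ^ 16 = 1) (hB : B ^ 4 = 1) (hAB : B⁻¹ * A * B = A ^ 3)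
    (g h : G64) : ee A B (g * h) = ee A B g * ee A B h := by
  show A ^ (g.x + pp g.y * h.x).val * B ^ (g.y + h.y).val = _
  have ex : A ^ (g.x + pp g.y * h.x).val = A ^ (g.x.val + 11 ^ g.y.val * h.x.val) := by
    refine pow_congr hA ?_
    push_cast [ZMod.natCast_val, ZMod.cast_id]
    simp [pp, ZMod.natCast_val, ZMod.cast_id]
  have ey : B ^ (g.y + h.y).val = B ^ (g.y.val + h.y.val) := by
    refine pow_congr hB ?_
    push_cast [ZMod.natCast_val, ZMod.cast_id]
    simp
  rw [ex, ey, pow_add, pow_add, ee, ee]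
  have hs := swap_pow hA hAB g.y.val h.x.val
  rw [show A ^ g.x.val * B ^ g.y.val * (A ^ h.x.val * B ^ h.y.val)
      = A ^ g.x.val * (B ^ g.y.val * A ^ h.x.val) * B ^ h.y.val by group, hs]
  group

end EE

end G64

/-! ### The presented group `G2` is isomorphic to `G64` -/

/-- A group `G` satisfies property (*) if it embeds as a subgroup of index 2 in
some group `Γ` generated by involutions (elements of order exactly 2). -/
def SatisfiesStar (G : Type*) [Group G] : Prop :=
  ∃ (Γ : Type) (_ : Group Γ) (f : G →* Γ),
    Function.Injective f ∧ f.range.index = 2 ∧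
    Subgroup.closure {x : Γ | orderOf x = 2} = ⊤

/-- The relators of the presentation `⟨a, b | a^16, b^4, [b,a] = a⁻²⟩`, where `a` is
`FreeGroup.of true`, `b` is `FreeGroup.of false`, and `[b,a] = b⁻¹a⁻¹ba`. -/
def G2Rels : Set (FreeGroup Bool) :=
  { FreeGroup.of true ^ 16,
    FreeGroup.of false ^ 4,
    (FreeGroup.of false)⁻¹ * (FreeGroup.of true)⁻¹ * FreeGroup.of false *
      FreeGroup.of true * ((FreeGroup.of true ^ (2 : ℤ))⁻¹)⁻¹ }

/-- The group `G₂ = ⟨a, b | a^16, b^4, [b,a] = a⁻²⟩` of order 64. -/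
abbrev G2 : Type := PresentedGroup G2Rels

namespace G64

def gen : Bool → G64 := fun t => if t then a else b

lemma relsOne : ∀ r ∈ G2Rels, FreeGroup.lift gen r = 1 := by
  intro r hr
  simp only [G2Rels, Set.mem_insert_iff, Set.mem_singleton_iff] at hr
  rcases hr with rfl | rfl | rfl <;>
    simp only [map_mul, map_inv, map_pow, map_zpow, FreeGroup.lift_apply_of, gen, if_pos, if_neg] <;>
    decide

/-- The canonical projection `G2 →* G64`. -/
def proj : G2 →* G64 := PresentedGroup.toGroup relsOne

def A2 : G2 := PresentedGroup.of true
def B2 : G2 := PresentedGroup.of false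

lemma proj_A2 : proj A2 = a := PresentedGroup.toGroup.of relsOne
lemma proj_B2 : proj B2 = b := PresentedGroup.toGroup.of relsOne

lemma mk_rel_one {r : FreeGroup Bool} (hr : r ∈ G2Rels) :
    PresentedGroup.mk G2Rels r = 1 := by
  exact (QuotientGroup.eq_one_iff r).mpr (Subgroup.subset_normalClosure hr)

lemma A2_pow16 : A2 ^ 16 = 1 := by
  have : PresentedGroup.mk G2Rels (FreeGroup.of true ^ 16) = 1 :=
    mk_rel_one (by simp [G2Rels])
  rwa [map_pow] at this

lemma B2_pow4 : B2 ^ 4 = 1 := by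
  have : PresentedGroup.mk G2Rels (FreeGroup.of false ^ 4) = 1 :=
    mk_rel_one (by simp [G2Rels])
  rwa [map_pow] at this

lemma rel_A2B2 : B2⁻¹ * A2 * B2 = A2 ^ 3 := by
  have h0 : B2⁻¹ * A2⁻¹ * B2 * A2 * ((A2 ^ (2 : ℤ))⁻¹)⁻¹ = 1 := by
    have : PresentedGroup.mk G2Rels ((FreeGroup.of false)⁻¹ * (FreeGroup.of true)⁻¹ *
        FreeGroup.of false * FreeGroup.of true * ((FreeGroup.of true ^ (2 : ℤ))⁻¹)⁻¹) = 1 :=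
      mk_rel_one (by simp [G2Rels])
    simp only [map_mul, map_inv, map_zpow] at this
    exact this
  have h1 : (B2⁻¹ * A2⁻¹ * B2) * (A2 ^ 3) = 1 := by
    rw [← h0]; group
  have h2 : B2⁻¹ * A2 * B2 = (B2⁻¹ * A2⁻¹ * B2)⁻¹ := by group
  rw [h2]
  exact inv_eq_of_mul_eq_one_right h1

/-- The section `G64 →* G2`. -/
def sec : G64 →* G2 := MonoidHom.mk' (ee A2 B2) (ee_mul A2_pow16 B2_pow4 rel_A2B2)

lemma sec_proj : ∀ w : G2, sec (proj w) = w := by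
  have h : sec.comp proj = MonoidHom.id G2 := by
    apply PresentedGroup.ext
    intro x
    cases x
    · show sec (proj B2) = B2
      rw [proj_B2]
      show A2 ^ (0 : ZMod 16).val * B2 ^ (1 : ZMod 4).val = B2
      rw [show (0 : ZMod 16).val = 0 from rfl, show (1 : ZMod 4).val = 1 from rfl]
      simp
    · show sec (proj A2) = A2
      rw [proj_A2]
      show A2 ^ (1 : ZMod 16).val * B2 ^ (0 : ZMod 4).val = A2
      rw [show (1 : ZMod 16).val = 1 from rfl, show (0 : ZMod 4).val = 0 from rfl]
      simp
  intro w
  exact DFunLike.congr_fun h w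

lemma proj_sec : ∀ g : G64, proj (sec g) = g := by
  intro g
  show proj (A2 ^ g.x.val * B2 ^ g.y.val) = g
  rw [map_mul, map_pow, map_pow, proj_A2, proj_B2]
  exact ee_ab g

/-- `G2 ≅ G64`. -/
def iso : G2 ≃* G64 :=
  { toFun := proj, invFun := sec, left_inv := sec_proj, right_inv := proj_sec,
    map_mul' := map_mul proj }

end G64

/-! ### Main theorem -/

open G64 in
theorem not_satisfiesStar_G64 : ¬ SatisfiesStar G64 := by
  rintro ⟨Γ, _, f, hinj, hidx, hclos⟩
  classical
  -- the range is a proper subgroup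
  have hne : f.range ≠ ⊤ := by
    intro h
    rw [h, Subgroup.index_top] at hidx
    norm_num at hidx
  -- there is an involution outside the range
  obtain ⟨t, ht2, htn⟩ : ∃ t : Γ, orderOf t = 2 ∧ t ∉ f.range := by
    by_contra h
    push_neg at h
    apply hne
    apply top_le_iff.mp
    rw [← hclos]
    exact Subgroup.closure_le _ |>.mpr (fun x hx => h x hx)
  have htt : t * t = 1 := by
    have h := pow_orderOf_eq_one t
    rwa [ht2, pow_two] at h
  have htinv : t⁻¹ = t := inv_eq_of_mul_eq_one_right htt
  -- membership in an index-2 subgroup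
  have hmm : ∀ u v : Γ, u * v ∈ f.range ↔ (u ∈ f.range ↔ v ∈ f.range) :=
    fun u v => Subgroup.mul_mem_iff_of_index_two hidx
  have hcoset : ∀ γ : Γ, γ ∉ f.range → γ * t ∈ f.range :=
    fun γ h => (hmm γ t).mpr (iff_of_false h htn)
  -- the conjugation automorphism `tau`
  have hconj : ∀ g : G64, t * f g * t ∈ f.range := by
    intro g
    have h1 : f g * t ∉ f.range := by
      intro h
      exact htn (((hmm (f g) t).mp h).mp ⟨g, rfl⟩)
    have h2 : t * (f g * t) ∈ f.range := (hmm t (f g * t)).mpr (iff_of_false htn h1)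
    rwa [← mul_assoc] at h2
  choose tau htau using fun g => MonoidHom.mem_range.mp (hconj g)
  have key : ∀ u v : Γ, (t * u * t) * (t * v * t) = t * (u * v) * t := by
    intro u v
    rw [show (t * u * t) * (t * v * t) = t * u * (t * t) * v * t by group, htt]
    group
  have tmul : ∀ g h : G64, tau (g * h) = tau g * tau h := by
    intro g h
    apply hinj
    rw [map_mul, htau, htau, htau, map_mul, key]
  let tauh : G64 →* G64 := MonoidHom.mk' tau tmul
  have tsq : ∀ g : G64, tau (tau g) = g := by
    intro g
    apply hinj
    rw [htau, htau]
    rw [show t * (t * f g * t) * t = (t * t) * f g * (t * t) by group, htt]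
    group
  set A := tau a with hA
  set B := tau b with hB
  have hB4 : B ^ 4 = 1 := by
    have : tauh (b ^ 4) = tauh 1 := by rw [b_pow4]
    simp at this
    exact this
  have hABrel : B⁻¹ * A * B = A ^ 3 := by
    have : tauh (b⁻¹ * a * b) = tauh (a ^ 3) := by rw [rel_ab]
    simp at this
    exact this
  have hEtau : ∀ g : G64, ee A B g = tau g := by
    intro g
    conv_rhs => rw [← ee_ab g]
    show A ^ g.x.val * B ^ g.y.val = tauh (a ^ g.x.val * b ^ g.y.val)
    rw [map_mul, map_pow, map_pow]
    rfl
  obtain ⟨c, hinv, hI⟩ := keyDecide A B hB4 hABrel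
    (by rw [hEtau]; exact tsq a) (by rw [hEtau]; exact tsq b)
  have hnutau : ∀ g : G64, nu c (tau g) = nu c g := fun g => by rw [← hEtau]; exact hinv g
  have hItau : ∀ g : G64, tau g = g⁻¹ → nu c g = 0 := fun g h => hI g (by rw [hEtau]; exact h)
  -- the invariant homomorphism
  let P : Γ → G64 := Function.invFun f
  have hPf : ∀ g : G64, P (f g) = g := Function.leftInverse_invFun hinj
  let φfun : Γ → Multiplicative (ZMod 2) :=
    fun γ => Multiplicative.ofAdd (nu c (P (if γ ∈ f.range then γ else γ * t)))
  have φ_in : ∀ (γ : Γ) (g : G64), f g = γ → φfun γ = Multiplicative.ofAdd (nu c g) := by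
    intro γ g hg
    subst hg
    have hm : f g ∈ f.range := ⟨g, rfl⟩
    simp only [φfun]
    rw [if_pos hm, hPf]
  have φ_out : ∀ (γ : Γ) (g : G64), γ ∉ f.range → f g = γ * t →
      φfun γ = Multiplicative.ofAdd (nu c g) := by
    intro γ g hγ hg
    simp only [φfun]
    rw [if_neg hγ, ← hg, hPf]
  have φmul : ∀ u v : Γ, φfun (u * v) = φfun u * φfun v := by
    intro u v
    by_cases hu : u ∈ f.range <;> by_cases hv : v ∈ f.range
    · obtain ⟨gu, hgu⟩ := hu
      obtain ⟨gv, hgv⟩ := hv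
      rw [φ_in u gu hgu, φ_in v gv hgv, φ_in (u * v) (gu * gv) (by rw [map_mul, hgu, hgv]),
        nu_mul, ofAdd_add]
    · obtain ⟨gu, hgu⟩ := hu
      obtain ⟨gv, hgv⟩ := MonoidHom.mem_range.mp (hcoset v hv)
      have huv : u * v ∉ f.range := fun h => hv (((hmm u v).mp h).mp ⟨gu, hgu⟩)
      rw [φ_in u gu hgu, φ_out v gv hv hgv,
        φ_out (u * v) (gu * gv) huv (by rw [map_mul, hgu, hgv, mul_assoc]),
        nu_mul, ofAdd_add]
    · obtain ⟨gu, hgu⟩ := MonoidHom.mem_range.mp (hcoset u hu)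
      obtain ⟨gv, hgv⟩ := hv
      have huv : u * v ∉ f.range := by
        intro h
        exact hu (((hmm u v).mp h).mpr ⟨gv, hgv⟩)
      have hu' : u = f gu * t := by
        rw [hgu, mul_assoc, htt, mul_one]
      have hfv : f (gu * tau gv) = (u * v) * t := by
        rw [map_mul, htau gv, hgv, hu']
        group
      rw [φ_out u gu hu hgu, φ_in v gv hgv, φ_out (u * v) (gu * tau gv) huv hfv,
        nu_mul, hnutau, ofAdd_add]
    · obtain ⟨gu, hgu⟩ := MonoidHom.mem_range.mp (hcoset u hu)
      obtain ⟨gv, hgv⟩ := MonoidHom.mem_range.mp (hcoset v hv)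
      have huv : u * v ∈ f.range := (hmm u v).mpr (iff_of_false hu hv)
      have hu' : u = f gu * t := by rw [hgu, mul_assoc, htt, mul_one]
      have hv' : v = f gv * t := by rw [hgv, mul_assoc, htt, mul_one]
      have hfv : f (gu * tau gv) = u * v := by
        rw [map_mul, htau gv, hgv]
        rw [show t * (v * t) * t = t * v * (t * t) by group, htt, mul_one, hu']
        group
      rw [φ_out u gu hu hgu, φ_out v gv hv hgv, φ_in (u * v) (gu * tau gv) hfv,
        nu_mul, hnutau, ofAdd_add]
  let φ : Γ →* Multiplicative (ZMod 2) := MonoidHom.mk' φfun φmul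
  -- all involutions are in the kernel of φ
  have hker : ∀ γ : Γ, orderOf γ = 2 → φfun γ = 1 := by
    intro γ hγ
    have hγ2 : γ * γ = 1 := by
      have h := pow_orderOf_eq_one γ
      rwa [hγ, pow_two] at h
    have hγi : γ⁻¹ = γ := inv_eq_of_mul_eq_one_right hγ2
    by_cases h : γ ∈ f.range
    · obtain ⟨g, hg⟩ := h
      have hgg : g * g = 1 := hinj (by rw [map_mul, hg, map_one, hγ2])
      rw [φ_in γ g hg, nu_sq c g hgg]
      rfl
    · obtain ⟨g, hg⟩ := MonoidHom.mem_range.mp (hcoset γ h)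
      have hgi : tau g = g⁻¹ := by
        apply hinj
        rw [htau, map_inv, hg]
        rw [show t * (γ * t) * t = t * γ * (t * t) by group, htt, mul_one,
          mul_inv_rev, htinv, hγi]
      rw [φ_out γ g h hg, hItau g hgi]
      rfl
  -- contradiction
  have hle : Subgroup.closure {x : Γ | orderOf x = 2} ≤ φ.ker := by
    apply (Subgroup.closure_le _).mpr
    intro x hx
    exact MonoidHom.mem_ker.mpr (hker x hx)
  rw [hclos] at hle
  have hwit : φfun (f (if c then a else b)) = 1 :=
    hle (Subgroup.mem_top _)
  rw [φ_in _ (if c then a else b) rfl] at hwit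
  have : nu c (if c then a else b) = 1 := by cases c <;> decide
  rw [this] at hwit
  exact absurd hwit (by decide)

/-- `G₂` does not satisfy property (*). -/
theorem G2_not_satisfiesStar : ¬ SatisfiesStar G2 := by
  intro ⟨Γ, inst, f0, hinj0, hidx0, hclos⟩
  apply not_satisfiesStar_G64
  refine ⟨Γ, inst, f0.comp G64.iso.symm.toMonoidHom, ?_, ?_, hclos⟩
  · exact hinj0.comp G64.iso.symm.injective
  · have : (f0.comp G64.iso.symm.toMonoidHom).range = f0.range := by
      ext γ
      constructor
      · rintro ⟨g, rfl⟩
        exact ⟨G64.iso.symm g, rfl⟩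
      · rintro ⟨w, rfl⟩
        exact ⟨G64.iso w, by simp⟩
    rw [this]
    exact hidx0
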